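/- With σ[Λ](x,y) = (1/Z[Λ]) e^{-c(x,y)/Λ} μ(x)ν(y), the function V can be written as V(Λ) = -2 log Z[Λ] + E_σ[log(Z₁ Z₂)], and its derivative satisfies dV/dΛ = (1/Λ²)·Cov_σ(c, log(Z₁Z₂)) = (1/Λ²)(E_σ[c·log(Z₁Z₂)] - E_σ[c]·E_σ[log(Z₁Z₂)]). -/

import Mathlib

open MeasureTheory


open Real Metric
open scoped ENNReal NNReal
set_option maxHeartbeats 1000000


lemma pt_mul_le {s Λ : ℝ} (hs : 0 ≤ s) (hΛ : 0 < Λ) :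
    s * Real.exp (-s / Λ) ≤ Λ / Real.exp 1 := by
  have h1 : s / Λ ≤ Real.exp (s / Λ - 1) := by
    have := Real.add_one_le_exp (s / Λ - 1)
    linarith
  have h2 : s * Real.exp (-s / Λ) = Λ * ((s / Λ) * Real.exp (-(s / Λ))) := by
    field_simp
  rw [h2]
  calc Λ * (s / Λ * Real.exp (-(s / Λ))) ≤ Λ * (Real.exp (s / Λ - 1) * Real.exp (-(s / Λ))) := by
        apply mul_le_mul_of_nonneg_left (mul_le_mul_of_nonneg_right h1 (Real.exp_nonneg _)) hΛ.le
    _ = Λ * Real.exp (-1) := by rw [← Real.exp_add]; ring_nf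
    _ = Λ / Real.exp 1 := by rw [Real.exp_neg, div_eq_mul_inv]

lemma pt_deriv (s : ℝ) {Λ : ℝ} (hΛ : Λ ≠ 0) :
    HasDerivAt (fun Λ => Real.exp (-s / Λ)) (s / Λ^2 * Real.exp (-s / Λ)) Λ := by
  have h1 : HasDerivAt (fun Λ : ℝ => -s / Λ) (s / Λ^2) Λ := by
    have h := (hasDerivAt_inv hΛ).const_mul (-s)
    have e1 : (fun Λ : ℝ => -s / Λ) = fun Λ : ℝ => -s * Λ⁻¹ := by
      funext t; rw [div_eq_mul_inv]
    rw [e1, show s / Λ^2 = -s * -(Λ^2)⁻¹ by field_simp]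
    exact h
  simpa [mul_comm] using h1.exp

section aux
variable {α : Type*} [MeasurableSpace α] {m : Measure α} [IsProbabilityMeasure m]

lemma aux_int_exp (f : α → ℝ) (hf : Measurable f) (hf0 : ∀ a, 0 ≤ f a) (Λ : ℝ) (hΛ : 0 < Λ) :
    Integrable (fun a => Real.exp (-f a / Λ)) m := by
  refine Integrable.mono' (integrable_const 1) ((hf.neg.div_const Λ).exp.aestronglyMeasurable) ?_
  filter_upwards with a
  rw [Real.norm_eq_abs, abs_of_pos (Real.exp_pos _)]
  exact Real.exp_le_one_iff.2 (by rw [neg_div]; exact neg_nonpos.2 (div_nonneg (hf0 a) hΛ.le))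

lemma aux_pos (f : α → ℝ) (hf : Measurable f) (hf0 : ∀ a, 0 ≤ f a) (Λ : ℝ) (hΛ : 0 < Λ) :
    0 < ∫ a, Real.exp (-f a / Λ) ∂m := by
  rw [integral_pos_iff_support_of_nonneg (fun a => (Real.exp_pos _).le)
    (aux_int_exp f hf hf0 Λ hΛ)]
  have : (Function.support fun a => Real.exp (-f a / Λ)) = Set.univ := by
    ext a; simp [Function.support, (Real.exp_pos _).ne']
  rw [this]
  simp

lemma aux_le_one (f : α → ℝ) (hf : Measurable f) (hf0 : ∀ a, 0 ≤ f a) (Λ : ℝ) (hΛ : 0 < Λ) :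
    ∫ a, Real.exp (-f a / Λ) ∂m ≤ 1 := by
  calc ∫ a, Real.exp (-f a / Λ) ∂m ≤ ∫ _a, (1:ℝ) ∂m := by
        refine integral_mono (aux_int_exp f hf hf0 Λ hΛ) (integrable_const 1) fun a => ?_
        exact Real.exp_le_one_iff.2 (by rw [neg_div]; exact neg_nonpos.2 (div_nonneg (hf0 a) hΛ.le))
    _ = 1 := by simp

lemma aux_int_mul (f : α → ℝ) (hf : Measurable f) (hf0 : ∀ a, 0 ≤ f a)
    (hfi : Integrable f m) (Λ : ℝ) (hΛ : 0 < Λ) :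
    Integrable (fun a => f a * Real.exp (-f a / Λ)) m := by
  refine hfi.mono' ((hf.mul (hf.neg.div_const Λ).exp).aestronglyMeasurable) ?_
  filter_upwards with a
  rw [Real.norm_eq_abs, abs_of_nonneg (mul_nonneg (hf0 a) (Real.exp_nonneg _))]
  have hle : -f a / Λ ≤ 0 := by
    rw [neg_div]; exact neg_nonpos.2 (div_nonneg (hf0 a) hΛ.le)
  have := mul_le_mul_of_nonneg_left (Real.exp_le_one_iff.2 hle) (hf0 a)
  simpa using this

lemma aux_jensen (f : α → ℝ) (hf : Measurable f) (hf0 : ∀ a, 0 ≤ f a)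
    (hfi : Integrable f m) (Λ : ℝ) (hΛ : 0 < Λ) :
    -(∫ a, f a ∂m) / Λ ≤ Real.log (∫ a, Real.exp (-f a / Λ) ∂m) := by
  have hpos : (0:ℝ) < ∫ a, Real.exp (-f a / Λ) ∂m := aux_pos f hf hf0 Λ hΛ
  rw [Real.le_log_iff_exp_le hpos]
  have := convexOn_exp.map_integral_le (f := fun a => -f a / Λ) (μ := m)
    Real.continuous_exp.continuousOn isClosed_univ
    (Filter.Eventually.of_forall fun a => Set.mem_univ _)
    ((hfi.neg).div_const Λ)
    (by exact (aux_int_exp f hf hf0 Λ hΛ))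
  calc Real.exp (-(∫ a, f a ∂m) / Λ) = Real.exp (∫ a, -f a / Λ ∂m) := by
        rw [integral_div, integral_neg]
    _ ≤ ∫ a, Real.exp (-f a / Λ) ∂m := this

lemma aux_log_bound (f : α → ℝ) (hf : Measurable f) (hf0 : ∀ a, 0 ≤ f a)
    (hfi : Integrable f m) (Λ : ℝ) (hΛ : 0 < Λ) :
    |Real.log (∫ a, Real.exp (-f a / Λ) ∂m)| ≤ (∫ a, f a ∂m) / Λ := by
  have h1 := aux_jensen f hf hf0 hfi Λ hΛ
  have h2 : Real.log (∫ a, Real.exp (-f a / Λ) ∂m) ≤ 0 :=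
    Real.log_nonpos (integral_nonneg fun a => (Real.exp_nonneg _)) (aux_le_one f hf hf0 Λ hΛ)
  rw [abs_le]
  constructor
  · calc -((∫ a, f a ∂m) / Λ) = -(∫ a, f a ∂m) / Λ := by ring
      _ ≤ _ := h1
  · exact h2.trans (div_nonneg (integral_nonneg hf0) hΛ.le)

lemma aux_mul_int_le (f : α → ℝ) (hf : Measurable f) (hf0 : ∀ a, 0 ≤ f a)
    (hfi : Integrable f m) (Λ : ℝ) (hΛ : 0 < Λ) :
    ∫ a, f a * Real.exp (-f a / Λ) ∂m ≤ Λ / Real.exp 1 := by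
  calc ∫ a, f a * Real.exp (-f a / Λ) ∂m ≤ ∫ _a, Λ / Real.exp 1 ∂m :=
        integral_mono (aux_int_mul f hf hf0 hfi Λ hΛ) (integrable_const _)
          (fun a => pt_mul_le (hf0 a) hΛ)
    _ = Λ / Real.exp 1 := by simp

lemma aux_deriv (f : α → ℝ) (hf : Measurable f) (hf0 : ∀ a, 0 ≤ f a)
    (hfi : Integrable f m) (Λ₀ : ℝ) (hΛ₀ : 0 < Λ₀) :
    HasDerivAt (fun Λ => ∫ a, Real.exp (-f a / Λ) ∂m)
      ((1/Λ₀^2) * ∫ a, f a * Real.exp (-f a / Λ₀) ∂m) Λ₀ := by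
  have hε : (0:ℝ) < Λ₀/2 := by linarith
  have key := hasDerivAt_integral_of_dominated_loc_of_deriv_le (μ := m)
    (F := fun Λ a => Real.exp (-f a / Λ))
    (F' := fun Λ a => f a / Λ^2 * Real.exp (-f a / Λ))
    (x₀ := Λ₀) (bound := fun a => (4/Λ₀^2) * f a) (Metric.ball_mem_nhds Λ₀ hε)
    (Filter.Eventually.of_forall fun Λ =>
      ((hf.neg.div_const Λ).exp).aestronglyMeasurable)
    (aux_int_exp f hf hf0 Λ₀ hΛ₀)
    (((hf.div_const _).mul (hf.neg.div_const Λ₀).exp).aestronglyMeasurable)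
    ?_ (hfi.const_mul _) ?_
  · have h2 : (∫ a, f a / Λ₀^2 * Real.exp (-f a / Λ₀) ∂m)
        = (1/Λ₀^2) * ∫ a, f a * Real.exp (-f a / Λ₀) ∂m := by
      rw [← integral_const_mul]
      congr 1; funext a; ring
    rw [← h2]
    exact key.2
  · filter_upwards with a
    intro Λ hΛ
    rw [mem_ball, Real.dist_eq, abs_lt] at hΛ
    have hΛpos : Λ₀/2 < Λ := by linarith
    have hΛpos' : 0 < Λ := by linarith
    rw [Real.norm_eq_abs, abs_of_nonneg (mul_nonneg (div_nonneg (hf0 a) (sq_nonneg _)) (Real.exp_nonneg _))]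
    have he : Real.exp (-f a / Λ) ≤ 1 := by
      rw [Real.exp_le_one_iff, neg_div]
      exact neg_nonpos.2 (div_nonneg (hf0 a) hΛpos'.le)
    calc f a / Λ^2 * Real.exp (-f a / Λ) ≤ f a / Λ^2 * 1 :=
          mul_le_mul_of_nonneg_left he (div_nonneg (hf0 a) (sq_nonneg _))
      _ = f a / Λ^2 := mul_one _
      _ ≤ 4/Λ₀^2 * f a := by
          rw [div_le_iff₀ (by positivity)]
          have h4 : Λ₀^2/4 ≤ Λ^2 := by nlinarith
          calc f a = 4/Λ₀^2 * f a * (Λ₀^2/4) := by field_simp; try ring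
            _ ≤ 4/Λ₀^2 * f a * Λ^2 := by
                exact mul_le_mul_of_nonneg_left h4 (mul_nonneg (by positivity) (hf0 a))
  · filter_upwards with a
    intro Λ hΛ
    rw [mem_ball, Real.dist_eq, abs_lt] at hΛ
    have hΛpos : (0:ℝ) < Λ := by linarith
    exact pt_deriv (f a) hΛpos.ne'
end aux

section main2
open MeasureTheory Real Metric
variable {α β : Type*} [MeasurableSpace α] [MeasurableSpace β]
  (m : Measure α) (n : Measure β) [IsProbabilityMeasure m] [IsProbabilityMeasure n]

lemma aux_int_fst {h : α → ℝ} (hm : Measurable h) (hi : Integrable h m) :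
    Integrable (fun z : α × β => h z.1) (m.prod n) := by
  refine (integrable_prod_iff (hm.comp measurable_fst).aestronglyMeasurable).2 ⟨?_, ?_⟩
  · exact Filter.Eventually.of_forall fun x =>
      (integrable_const (h x) : Integrable (fun _ : β => h x) n)
  · simpa using hi.norm

lemma aux_int_snd {h : β → ℝ} (hm : Measurable h) (hi : Integrable h n) :
    Integrable (fun z : α × β => h z.2) (m.prod n) := by
  have h1 := aux_int_fst (β := α) n m hm hi
  have h2 := h1.swap
  exact h2.congr (Filter.Eventually.of_forall fun z => rfl)

lemma aux_main (k : α × β → ℝ) (hk : Measurable k) (hk0 : ∀ z, 0 ≤ k z)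
    (hki : Integrable k (m.prod n)) (Λ₀ : ℝ) (hΛ₀ : 0 < Λ₀) :
    HasDerivAt (fun Λ => ∫ x, (∫ y, Real.exp (-k (x, y) / Λ) ∂n) *
        Real.log (∫ y, Real.exp (-k (x, y) / Λ) ∂n) ∂m)
      (∫ x, ((1/Λ₀^2) * ∫ y, k (x, y) * Real.exp (-k (x, y) / Λ₀) ∂n) *
        (Real.log (∫ y, Real.exp (-k (x, y) / Λ₀) ∂n) + 1) ∂m) Λ₀ := by
  have hε : (0:ℝ) < Λ₀/2 := by linarith
  set g : ℝ → α → ℝ := fun Λ x => ∫ y, Real.exp (-k (x, y) / Λ) ∂n with hg_def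
  set gd : ℝ → α → ℝ := fun Λ x => (1/Λ^2) * ∫ y, k (x, y) * Real.exp (-k (x, y) / Λ) ∂n
    with hgd_def
  set C : α → ℝ := fun x => ∫ y, k (x, y) ∂n with hC_def
  have hgm : ∀ Λ : ℝ, Measurable (g Λ) := by
    intro Λ
    exact ((hk.neg.div_const Λ).exp.stronglyMeasurable.integral_prod_right').measurable
  have hgdm : ∀ Λ : ℝ, Measurable (gd Λ) := by
    intro Λ
    exact measurable_const.mul
      ((hk.mul (hk.neg.div_const Λ).exp).stronglyMeasurable.integral_prod_right').measurable
  have hCm : Measurable C := hk.stronglyMeasurable.integral_prod_right'.measurable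
  have hCi : Integrable C m := by
    have := hki.integral_norm_prod_left
    refine this.congr ?_
    filter_upwards with x
    congr 1; funext y; rw [Real.norm_eq_abs, abs_of_nonneg (hk0 _)]
  have hC0 : ∀ x, 0 ≤ C x := fun x => integral_nonneg fun y => hk0 _
  have hae : ∀ᵐ x ∂m, Integrable (fun y => k (x, y)) n := hki.prod_right_ae
  have hgpos : ∀ Λ > (0:ℝ), ∀ x, 0 < g Λ x := fun Λ hΛ x =>
    aux_pos (fun y => k (x, y)) (hk.comp (measurable_prodMk_left)) (fun y => hk0 _) Λ hΛ
  have hgle1 : ∀ Λ > (0:ℝ), ∀ x, g Λ x ≤ 1 := fun Λ hΛ x =>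
    aux_le_one (fun y => k (x, y)) (hk.comp (measurable_prodMk_left)) (fun y => hk0 _) Λ hΛ
  have key := hasDerivAt_integral_of_dominated_loc_of_deriv_le (μ := m)
    (F := fun Λ x => g Λ x * Real.log (g Λ x))
    (F' := fun Λ x => gd Λ x * (Real.log (g Λ x) + 1))
    (x₀ := Λ₀)
    (bound := fun x => (2 / (Real.exp 1 * Λ₀)) * ((2/Λ₀) * C x + 1)) (Metric.ball_mem_nhds Λ₀ hε)
    (Filter.Eventually.of_forall fun Λ =>
      ((hgm Λ).mul (hgm Λ).log).aestronglyMeasurable)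
    ?hFint
    (((hgdm Λ₀).mul ((hgm Λ₀).log.add measurable_const)).aestronglyMeasurable)
    ?hbound (((hCi.const_mul (2/Λ₀)).add (integrable_const 1)).const_mul (2 / (Real.exp 1 * Λ₀))) ?hdiff
  · exact key.2
  case hFint =>
    refine Integrable.mono' (hCi.div_const Λ₀) ((hgm Λ₀).mul (hgm Λ₀).log).aestronglyMeasurable ?_
    filter_upwards [hae] with x hx
    have h1 := hgpos Λ₀ hΛ₀ x
    have h2 := hgle1 Λ₀ hΛ₀ x
    have h3 : |Real.log (g Λ₀ x)| ≤ C x / Λ₀ :=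
      aux_log_bound (fun y => k (x, y)) (hk.comp measurable_prodMk_left)
        (fun y => hk0 _) hx Λ₀ hΛ₀
    rw [Real.norm_eq_abs, abs_mul]
    calc |g Λ₀ x| * |Real.log (g Λ₀ x)| ≤ 1 * |Real.log (g Λ₀ x)| := by
          apply mul_le_mul_of_nonneg_right _ (abs_nonneg _)
          rw [abs_of_pos h1]; exact h2
      _ = |Real.log (g Λ₀ x)| := one_mul _
      _ ≤ C x / Λ₀ := h3
  case hbound =>
    filter_upwards [hae] with x hx
    intro Λ hΛ
    rw [mem_ball, Real.dist_eq, abs_lt] at hΛ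
    have hΛ2 : Λ₀/2 < Λ := by linarith
    have hΛpos : 0 < Λ := by linarith
    have hkm : Measurable (fun y => k (x, y)) := hk.comp measurable_prodMk_left
    have hgd1 : |gd Λ x| ≤ 2 / (Real.exp 1 * Λ₀) := by
      have h1 : ∫ y, k (x, y) * Real.exp (-k (x, y) / Λ) ∂n ≤ Λ / Real.exp 1 :=
        aux_mul_int_le (fun y => k (x, y)) hkm (fun y => hk0 _) hx Λ hΛpos
      have h2 : 0 ≤ ∫ y, k (x, y) * Real.exp (-k (x, y) / Λ) ∂n :=
        integral_nonneg fun y => mul_nonneg (hk0 _) (Real.exp_nonneg _)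
      rw [hgd_def, abs_of_nonneg (mul_nonneg (by positivity) h2)]
      calc (1/Λ^2) * ∫ y, k (x, y) * Real.exp (-k (x, y) / Λ) ∂n
          ≤ (1/Λ^2) * (Λ / Real.exp 1) := by
            exact mul_le_mul_of_nonneg_left h1 (by positivity)
        _ = 1 / (Real.exp 1 * Λ) := by field_simp
        _ ≤ 2 / (Real.exp 1 * Λ₀) := by
            rw [div_le_div_iff₀ (by positivity) (by positivity)]
            have he := Real.exp_pos 1
            nlinarith
    have hlog : |Real.log (g Λ x)| ≤ (2/Λ₀) * C x := by
      have h5 : |Real.log (g Λ x)| ≤ C x / Λ :=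
        aux_log_bound (fun y => k (x, y)) hkm (fun y => hk0 _) hx Λ hΛpos
      refine h5.trans ?_
      rw [div_le_iff₀ hΛpos]
      have h7 : (1:ℝ) ≤ 2/Λ₀ * Λ := by
        rw [div_mul_eq_mul_div, le_div_iff₀ hΛ₀]; linarith
      calc C x = C x * 1 := (mul_one _).symm
        _ ≤ C x * (2/Λ₀ * Λ) := mul_le_mul_of_nonneg_left h7 (hC0 x)
        _ = 2/Λ₀ * C x * Λ := by ring
    rw [Real.norm_eq_abs, abs_mul]
    have h4 : |Real.log (g Λ x) + 1| ≤ (2/Λ₀) * C x + 1 := by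
      calc |Real.log (g Λ x) + 1| ≤ |Real.log (g Λ x)| + 1 := by
            have := abs_add_le (Real.log (g Λ x)) 1
            simpa using this
        _ ≤ (2/Λ₀) * C x + 1 := by linarith
    exact mul_le_mul hgd1 h4 (abs_nonneg _) (by positivity)
  case hdiff =>
    filter_upwards [hae] with x hx
    intro Λ hΛ
    rw [mem_ball, Real.dist_eq, abs_lt] at hΛ
    have hΛpos : 0 < Λ := by linarith
    have hkm : Measurable (fun y => k (x, y)) := hk.comp measurable_prodMk_left
    have hD : HasDerivAt (fun Λ => g Λ x) (gd Λ x) Λ :=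
      aux_deriv (fun y => k (x, y)) hkm (fun y => hk0 _) hx Λ hΛpos
    have hpos := hgpos Λ hΛpos x
    have hlog : HasDerivAt (fun Λ => Real.log (g Λ x)) (gd Λ x / g Λ x) Λ :=
      hD.log hpos.ne'
    have := hD.mul hlog
    exact this.congr_deriv (by rw [mul_comm (g Λ x), div_mul_cancel₀ _ hpos.ne']; ring)
end main2

/-- With `σ[Λ] = (1/Z[Λ]) e^{-c/Λ} μ ⊗ ν`, one has
`V(Λ) = -2 log Z[Λ] + E_σ[log(Z₁ Z₂)]` and
`dV/dΛ = (1/Λ²)(E_σ[c log(Z₁Z₂)] - E_σ[c] E_σ[log(Z₁Z₂)])`. -/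
theorem stmt_13 {dx dy : ℕ}
    (c : EuclideanSpace ℝ (Fin dx) × EuclideanSpace ℝ (Fin dy) → ℝ)
    (hc_meas : Measurable c) (hc_nonneg : ∀ z, 0 ≤ c z)
    (μ : Measure (EuclideanSpace ℝ (Fin dx))) (ν : Measure (EuclideanSpace ℝ (Fin dy)))
    [IsProbabilityMeasure μ] [IsProbabilityMeasure ν]
    (hint : Integrable c (μ.prod ν))
    (Z : ℝ → ℝ) (Z₁ : ℝ → EuclideanSpace ℝ (Fin dx) → ℝ)
    (Z₂ : ℝ → EuclideanSpace ℝ (Fin dy) → ℝ)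
    (hZ : ∀ Λ > (0:ℝ), Z Λ = ∫ z, Real.exp (-c z / Λ) ∂(μ.prod ν))
    (hZ₁ : ∀ Λ > (0:ℝ), ∀ x, Z₁ Λ x = ∫ y, Real.exp (-c (x, y) / Λ) ∂ν)
    (hZ₂ : ∀ Λ > (0:ℝ), ∀ y, Z₂ Λ y = ∫ x, Real.exp (-c (x, y) / Λ) ∂μ)
    (V : ℝ → ℝ)
    (hV : ∀ Λ > (0:ℝ), V Λ = -2 * Real.log (Z Λ) +
      (1 / Z Λ) * (∫ x, Z₁ Λ x * Real.log (Z₁ Λ x) ∂μ) +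
      (1 / Z Λ) * ∫ y, Z₂ Λ y * Real.log (Z₂ Λ y) ∂ν)
    (Λ₀ : ℝ) (hΛ₀ : 0 < Λ₀)
    (σ : Measure (EuclideanSpace ℝ (Fin dx) × EuclideanSpace ℝ (Fin dy)))
    (hσ : σ = (μ.prod ν).withDensity
      (fun z => ENNReal.ofReal (Real.exp (-c z / Λ₀) / Z Λ₀))) :
    V Λ₀ = -2 * Real.log (Z Λ₀) + (∫ z, Real.log (Z₁ Λ₀ z.1 * Z₂ Λ₀ z.2) ∂σ) ∧
    HasDerivAt V ((1 / Λ₀ ^ 2) *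
      ((∫ z, c z * Real.log (Z₁ Λ₀ z.1 * Z₂ Λ₀ z.2) ∂σ) -
        (∫ z, c z ∂σ) * ∫ z, Real.log (Z₁ Λ₀ z.1 * Z₂ Λ₀ z.2) ∂σ)) Λ₀ := by
  -- notation
  set P := μ.prod ν with hPdef
  let E : _ → ℝ := fun z => Real.exp (-c z / Λ₀)
  let g₁ : EuclideanSpace ℝ (Fin dx) → ℝ := fun x => ∫ y, Real.exp (-c (x, y) / Λ₀) ∂ν
  let g₂ : EuclideanSpace ℝ (Fin dy) → ℝ := fun y => ∫ x, Real.exp (-c (x, y) / Λ₀) ∂μ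
  let Cx : EuclideanSpace ℝ (Fin dx) → ℝ := fun x => ∫ y, c (x, y) ∂ν
  let Cy : EuclideanSpace ℝ (Fin dy) → ℝ := fun y => ∫ x, c (x, y) ∂μ
  let Fz : ℝ → ℝ := fun Λ => ∫ z, Real.exp (-c z / Λ) ∂P
  let G1f : ℝ → ℝ := fun Λ => ∫ x, (∫ y, Real.exp (-c (x, y) / Λ) ∂ν) *
      Real.log (∫ y, Real.exp (-c (x, y) / Λ) ∂ν) ∂μ
  let G2f : ℝ → ℝ := fun Λ => ∫ y, (∫ x, Real.exp (-c (x, y) / Λ) ∂μ) *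
      Real.log (∫ x, Real.exp (-c (x, y) / Λ) ∂μ) ∂ν
  -- scalars
  set A : ℝ := ∫ z, c z * E z ∂P with hA
  set B₁ : ℝ := ∫ z, c z * E z * Real.log (g₁ z.1) ∂P with hB₁
  set B₂ : ℝ := ∫ z, c z * E z * Real.log (g₂ z.2) ∂P with hB₂
  set L₁ : ℝ := ∫ x, g₁ x * Real.log (g₁ x) ∂μ with hL₁
  set L₂ : ℝ := ∫ y, g₂ y * Real.log (g₂ y) ∂ν with hL₂
  -- measurability
  have hg₁m : Measurable g₁ :=
    ((hc_meas.neg.div_const Λ₀).exp.stronglyMeasurable.integral_prod_right').measurable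
  have hg₂m : Measurable g₂ :=
    (((hc_meas.comp measurable_swap).neg.div_const Λ₀).exp.stronglyMeasurable.integral_prod_right').measurable
  have hCxm : Measurable Cx := hc_meas.stronglyMeasurable.integral_prod_right'.measurable
  have hCym : Measurable Cy :=
    (hc_meas.comp measurable_swap).stronglyMeasurable.integral_prod_right'.measurable
  have hCxi : Integrable Cx μ := by
    have := hint.integral_norm_prod_left
    refine this.congr ?_
    filter_upwards with x
    congr 1; funext y; rw [Real.norm_eq_abs, abs_of_nonneg (hc_nonneg _)]
  have hCyi : Integrable Cy ν := by
    have := hint.swap.integral_norm_prod_left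
    refine this.congr ?_
    filter_upwards with y
    congr 1; funext x
    show ‖(c ∘ Prod.swap) (y, x)‖ = c (x, y)
    simp only [Function.comp_apply, Prod.swap_prod_mk, Real.norm_eq_abs]
    exact abs_of_nonneg (hc_nonneg _)
  have hCx0 : ∀ x, 0 ≤ Cx x := fun x => integral_nonneg fun y => hc_nonneg _
  have hCy0 : ∀ y, 0 ≤ Cy y := fun y => integral_nonneg fun x => hc_nonneg _
  -- positivity of partition functions
  have hFpos : 0 < Fz Λ₀ := aux_pos c hc_meas hc_nonneg Λ₀ hΛ₀
  have hg₁pos : ∀ x, 0 < g₁ x := fun x =>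
    aux_pos (fun y => c (x, y)) (hc_meas.comp measurable_prodMk_left) (fun y => hc_nonneg _) Λ₀ hΛ₀
  have hg₂pos : ∀ y, 0 < g₂ y := fun y =>
    aux_pos (fun x => c (x, y)) (hc_meas.comp (measurable_id.prodMk measurable_const))
      (fun x => hc_nonneg _) Λ₀ hΛ₀
  have hg₁le : ∀ x, g₁ x ≤ 1 := fun x =>
    aux_le_one (fun y => c (x, y)) (hc_meas.comp measurable_prodMk_left) (fun y => hc_nonneg _) Λ₀ hΛ₀
  have hg₂le : ∀ y, g₂ y ≤ 1 := fun y =>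
    aux_le_one (fun x => c (x, y)) (hc_meas.comp (measurable_id.prodMk measurable_const))
      (fun x => hc_nonneg _) Λ₀ hΛ₀
  have hZF : Z Λ₀ = Fz Λ₀ := hZ Λ₀ hΛ₀
  -- a.e. log bounds transferred to the product
  have hlogb1 : ∀ᵐ x ∂μ, |Real.log (g₁ x)| ≤ Cx x / Λ₀ := by
    filter_upwards [hint.prod_right_ae] with x hx
    exact aux_log_bound (fun y => c (x, y)) (hc_meas.comp measurable_prodMk_left)
      (fun y => hc_nonneg _) hx Λ₀ hΛ₀
  have hlogb2 : ∀ᵐ y ∂ν, |Real.log (g₂ y)| ≤ Cy y / Λ₀ := by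
    filter_upwards [hint.prod_left_ae] with y hy
    exact aux_log_bound (fun x => c (x, y)) (hc_meas.comp (measurable_id.prodMk measurable_const))
      (fun x => hc_nonneg _) hy Λ₀ hΛ₀
  have hlogP1 : ∀ᵐ z ∂P, |Real.log (g₁ z.1)| ≤ Cx z.1 / Λ₀ :=
    MeasureTheory.Measure.quasiMeasurePreserving_fst.ae hlogb1
  have hlogP2 : ∀ᵐ z ∂P, |Real.log (g₂ z.2)| ≤ Cy z.2 / Λ₀ :=
    MeasureTheory.Measure.quasiMeasurePreserving_snd.ae hlogb2
  -- integrabilities on the product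
  have iE : Integrable E P := aux_int_exp c hc_meas hc_nonneg Λ₀ hΛ₀
  have icE : Integrable (fun z => c z * E z) P := aux_int_mul c hc_meas hc_nonneg hint Λ₀ hΛ₀
  have iCx1 : Integrable (fun z => Cx z.1) P := aux_int_fst μ ν hCxm hCxi
  have iCy2 : Integrable (fun z => Cy z.2) P := aux_int_snd μ ν hCym hCyi
  have hlog1m : Measurable (fun z : EuclideanSpace ℝ (Fin dx) × EuclideanSpace ℝ (Fin dy) => Real.log (g₁ z.1)) :=
    (hg₁m.log).comp measurable_fst
  have hlog2m : Measurable (fun z : EuclideanSpace ℝ (Fin dx) × EuclideanSpace ℝ (Fin dy) => Real.log (g₂ z.2)) :=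
    (hg₂m.log).comp measurable_snd
  have hEm : Measurable E := (hc_meas.neg.div_const Λ₀).exp
  have hE0 : ∀ z, 0 ≤ E z := fun z => (Real.exp_pos _).le
  have hEle1 : ∀ z, E z ≤ 1 := fun z => by
    rw [Real.exp_le_one_iff, neg_div]
    exact neg_nonpos.2 (div_nonneg (hc_nonneg z) hΛ₀.le)
  have iElog1 : Integrable (fun z => E z * Real.log (g₁ z.1)) P := by
    refine Integrable.mono' (iCx1.div_const Λ₀) (hEm.mul hlog1m).aestronglyMeasurable ?_
    filter_upwards [hlogP1] with z hz
    rw [Real.norm_eq_abs, abs_mul, abs_of_nonneg (hE0 z)]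
    calc E z * |Real.log (g₁ z.1)| ≤ 1 * |Real.log (g₁ z.1)| :=
          mul_le_mul_of_nonneg_right (hEle1 z) (abs_nonneg _)
      _ = |Real.log (g₁ z.1)| := one_mul _
      _ ≤ Cx z.1 / Λ₀ := hz
  have iElog2 : Integrable (fun z => E z * Real.log (g₂ z.2)) P := by
    refine Integrable.mono' (iCy2.div_const Λ₀) (hEm.mul hlog2m).aestronglyMeasurable ?_
    filter_upwards [hlogP2] with z hz
    rw [Real.norm_eq_abs, abs_mul, abs_of_nonneg (hE0 z)]
    calc E z * |Real.log (g₂ z.2)| ≤ 1 * |Real.log (g₂ z.2)| :=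
          mul_le_mul_of_nonneg_right (hEle1 z) (abs_nonneg _)
      _ = |Real.log (g₂ z.2)| := one_mul _
      _ ≤ Cy z.2 / Λ₀ := hz
  have hcEb : ∀ z, c z * E z ≤ Λ₀ / Real.exp 1 := fun z => pt_mul_le (hc_nonneg z) hΛ₀
  have hcE0 : ∀ z, 0 ≤ c z * E z := fun z => mul_nonneg (hc_nonneg z) (hE0 z)
  have icElog1 : Integrable (fun z => c z * E z * Real.log (g₁ z.1)) P := by
    refine Integrable.mono' ((iCx1.div_const Λ₀).const_mul (Λ₀ / Real.exp 1))
      ((hc_meas.mul hEm).mul hlog1m).aestronglyMeasurable ?_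
    filter_upwards [hlogP1] with z hz
    rw [Real.norm_eq_abs, abs_mul, abs_of_nonneg (hcE0 z)]
    exact mul_le_mul (hcEb z) hz (abs_nonneg _) (by positivity)
  have icElog2 : Integrable (fun z => c z * E z * Real.log (g₂ z.2)) P := by
    refine Integrable.mono' ((iCy2.div_const Λ₀).const_mul (Λ₀ / Real.exp 1))
      ((hc_meas.mul hEm).mul hlog2m).aestronglyMeasurable ?_
    filter_upwards [hlogP2] with z hz
    rw [Real.norm_eq_abs, abs_mul, abs_of_nonneg (hcE0 z)]
    exact mul_le_mul (hcEb z) hz (abs_nonneg _) (by positivity)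
  -- Fubini identities
  have hL1eq : ∫ z, E z * Real.log (g₁ z.1) ∂P = L₁ := by
    rw [integral_prod _ iElog1, hL₁]
    congr 1; funext x
    calc ∫ y, E (x, y) * Real.log (g₁ x) ∂ν
        = (∫ y, Real.exp (-c (x, y) / Λ₀) ∂ν) * Real.log (g₁ x) := integral_mul_const _ _
      _ = g₁ x * Real.log (g₁ x) := rfl
  have hL2eq : ∫ z, E z * Real.log (g₂ z.2) ∂P = L₂ := by
    rw [integral_prod_symm _ iElog2, hL₂]
    congr 1; funext y
    calc ∫ x, E (x, y) * Real.log (g₂ y) ∂μ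
        = (∫ x, Real.exp (-c (x, y) / Λ₀) ∂μ) * Real.log (g₂ y) := integral_mul_const _ _
      _ = g₂ y * Real.log (g₂ y) := rfl
  have hB1eq : ∫ x, (∫ y, c (x, y) * Real.exp (-c (x, y) / Λ₀) ∂ν) * Real.log (g₁ x) ∂μ = B₁ := by
    rw [hB₁, integral_prod _ icElog1]
    congr 1; funext x
    exact (integral_mul_const _ _).symm
  have hB2eq : ∫ y, (∫ x, c (x, y) * Real.exp (-c (x, y) / Λ₀) ∂μ) * Real.log (g₂ y) ∂ν = B₂ := by
    rw [hB₂, integral_prod_symm _ icElog2]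
    congr 1; funext y
    exact (integral_mul_const _ _).symm
  have hA1eq : ∫ x, (∫ y, c (x, y) * Real.exp (-c (x, y) / Λ₀) ∂ν) ∂μ = A := by
    rw [hA, integral_prod _ icE]
  have hA2eq : ∫ y, (∫ x, c (x, y) * Real.exp (-c (x, y) / Λ₀) ∂μ) ∂ν = A := by
    rw [hA, integral_prod_symm _ icE]
  -- σ-integrals
  have hσint : ∀ f : _ → ℝ, ∫ z, f z ∂σ = ∫ z, (E z / Fz Λ₀) * f z ∂P := by
    intro f
    rw [hσ, hZF]
    have hd : Measurable fun z => (E z / Fz Λ₀).toNNReal :=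
      (hEm.div_const _).real_toNNReal
    rw [show (fun z => ENNReal.ofReal (Real.exp (-c z / Λ₀) / Fz Λ₀)) =
        (fun z => ((fun z => (E z / Fz Λ₀).toNNReal) z : ℝ≥0∞)) from rfl]
    rw [integral_withDensity_eq_integral_smul hd f]
    congr 1; funext z
    rw [NNReal.smul_def, Real.coe_toNNReal _ (div_nonneg (hE0 z) hFpos.le), smul_eq_mul]
  have hlogsum : ∀ z : EuclideanSpace ℝ (Fin dx) × EuclideanSpace ℝ (Fin dy),
      Real.log (Z₁ Λ₀ z.1 * Z₂ Λ₀ z.2) = Real.log (g₁ z.1) + Real.log (g₂ z.2) := by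
    intro z
    rw [hZ₁ Λ₀ hΛ₀, hZ₂ Λ₀ hΛ₀]
    exact Real.log_mul (hg₁pos z.1).ne' (hg₂pos z.2).ne'
  have hσ1 : ∫ z, Real.log (Z₁ Λ₀ z.1 * Z₂ Λ₀ z.2) ∂σ = (L₁ + L₂) / Fz Λ₀ := by
    rw [hσint]
    have : ∀ z, (E z / Fz Λ₀) * Real.log (Z₁ Λ₀ z.1 * Z₂ Λ₀ z.2) =
        (1 / Fz Λ₀) * (E z * Real.log (g₁ z.1) + E z * Real.log (g₂ z.2)) := by
      intro z; rw [hlogsum z]; ring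
    simp_rw [this]
    rw [integral_const_mul, integral_add iElog1 iElog2, hL1eq, hL2eq]
    ring
  have hσ2 : ∫ z, c z * Real.log (Z₁ Λ₀ z.1 * Z₂ Λ₀ z.2) ∂σ = (B₁ + B₂) / Fz Λ₀ := by
    rw [hσint]
    have : ∀ z, (E z / Fz Λ₀) * (c z * Real.log (Z₁ Λ₀ z.1 * Z₂ Λ₀ z.2)) =
        (1 / Fz Λ₀) * (c z * E z * Real.log (g₁ z.1) + c z * E z * Real.log (g₂ z.2)) := by
      intro z; rw [hlogsum z]; ring
    simp_rw [this]
    rw [integral_const_mul, integral_add icElog1 icElog2, hB₁, hB₂]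
    ring
  have hσ3 : ∫ z, c z ∂σ = A / Fz Λ₀ := by
    rw [hσint]
    have : ∀ z, (E z / Fz Λ₀) * c z = (1 / Fz Λ₀) * (c z * E z) := by
      intro z; ring
    simp_rw [this]
    rw [integral_const_mul, hA]
    ring
  -- Part 1
  have hVval : V Λ₀ = -2 * Real.log (Z Λ₀) + (1 / Fz Λ₀) * L₁ + (1 / Fz Λ₀) * L₂ := by
    have e1 : ∫ x, Z₁ Λ₀ x * Real.log (Z₁ Λ₀ x) ∂μ = L₁ := by
      rw [hL₁]
      refine integral_congr_ae (Filter.Eventually.of_forall fun x => ?_)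
      simp only [hZ₁ Λ₀ hΛ₀ x]
      rfl
    have e2 : ∫ y, Z₂ Λ₀ y * Real.log (Z₂ Λ₀ y) ∂ν = L₂ := by
      rw [hL₂]
      refine integral_congr_ae (Filter.Eventually.of_forall fun y => ?_)
      simp only [hZ₂ Λ₀ hΛ₀ y]
      rfl
    rw [hV Λ₀ hΛ₀, hZF, e1, e2]
  constructor
  · rw [hVval, hσ1]
    field_simp
    ring
  · -- Part 2
    have hF0 : Fz Λ₀ ≠ 0 := hFpos.ne'
    have hF : HasDerivAt Fz ((1/Λ₀^2) * A) Λ₀ :=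
      aux_deriv c hc_meas hc_nonneg hint Λ₀ hΛ₀
    have hG1 : HasDerivAt G1f
        (∫ x, ((1/Λ₀^2) * ∫ y, c (x, y) * Real.exp (-c (x, y) / Λ₀) ∂ν) *
          (Real.log (g₁ x) + 1) ∂μ) Λ₀ := aux_main μ ν c hc_meas hc_nonneg hint Λ₀ hΛ₀
    have hG2 : HasDerivAt G2f
        (∫ y, ((1/Λ₀^2) * ∫ x, c (x, y) * Real.exp (-c (x, y) / Λ₀) ∂μ) *
          (Real.log (g₂ y) + 1) ∂ν) Λ₀ :=
      aux_main ν μ (fun w => c (w.2, w.1)) (hc_meas.comp measurable_swap)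
        (fun w => hc_nonneg _) hint.swap Λ₀ hΛ₀
    -- identify the derivative values
    have hJ1 : Integrable (fun x => (∫ y, c (x, y) * Real.exp (-c (x, y) / Λ₀) ∂ν) *
        Real.log (g₁ x)) μ := by
      have h := icElog1.integral_prod_left
      refine h.congr (Filter.Eventually.of_forall fun x => ?_)
      exact integral_mul_const (Real.log (g₁ x))
        (fun y => c (x, y) * Real.exp (-c (x, y) / Λ₀))
    have hJ2 : Integrable (fun x => ∫ y, c (x, y) * Real.exp (-c (x, y) / Λ₀) ∂ν) μ :=
      icE.integral_prod_left
    have hJ1s : Integrable (fun y => (∫ x, c (x, y) * Real.exp (-c (x, y) / Λ₀) ∂μ) *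
        Real.log (g₂ y)) ν := by
      have h := icElog2.swap.integral_prod_left
      refine h.congr (Filter.Eventually.of_forall fun y => ?_)
      exact integral_mul_const (Real.log (g₂ y))
        (fun x => c (x, y) * Real.exp (-c (x, y) / Λ₀))
    have hJ2s : Integrable (fun y => ∫ x, c (x, y) * Real.exp (-c (x, y) / Λ₀) ∂μ) ν :=
      icE.swap.integral_prod_left
    have hG1' : (∫ x, ((1/Λ₀^2) * ∫ y, c (x, y) * Real.exp (-c (x, y) / Λ₀) ∂ν) *
        (Real.log (g₁ x) + 1) ∂μ) = (1/Λ₀^2) * (B₁ + A) := by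
      have e : ∀ x, ((1/Λ₀^2) * ∫ y, c (x, y) * Real.exp (-c (x, y) / Λ₀) ∂ν) *
          (Real.log (g₁ x) + 1) = (1/Λ₀^2) *
          ((∫ y, c (x, y) * Real.exp (-c (x, y) / Λ₀) ∂ν) * Real.log (g₁ x) +
            (∫ y, c (x, y) * Real.exp (-c (x, y) / Λ₀) ∂ν)) := by
        intro x; ring
      simp_rw [e]
      rw [integral_const_mul, integral_add hJ1 hJ2, hB1eq, hA1eq]
    have hG2' : (∫ y, ((1/Λ₀^2) * ∫ x, c (x, y) * Real.exp (-c (x, y) / Λ₀) ∂μ) *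
        (Real.log (g₂ y) + 1) ∂ν) = (1/Λ₀^2) * (B₂ + A) := by
      have e : ∀ y, ((1/Λ₀^2) * ∫ x, c (x, y) * Real.exp (-c (x, y) / Λ₀) ∂μ) *
          (Real.log (g₂ y) + 1) = (1/Λ₀^2) *
          ((∫ x, c (x, y) * Real.exp (-c (x, y) / Λ₀) ∂μ) * Real.log (g₂ y) +
            (∫ x, c (x, y) * Real.exp (-c (x, y) / Λ₀) ∂μ)) := by
        intro y; ring
      simp_rw [e]
      rw [integral_const_mul, integral_add hJ1s hJ2s, hB2eq, hA2eq]
    -- combined derivative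
    have hWd := (((hF.log hF0).const_mul (-2:ℝ)).add (hG1.div hF hF0)).add (hG2.div hF hF0)
    -- V agrees with combination near Λ₀
    have heq : V =ᶠ[nhds Λ₀]
        (fun Λ => -2 * Real.log (Fz Λ) + G1f Λ / Fz Λ + G2f Λ / Fz Λ) := by
      refine Filter.eventuallyEq_of_mem (Ioi_mem_nhds hΛ₀) ?_
      intro Λ hΛ
      rw [Set.mem_Ioi] at hΛ
      have e1 : ∫ x, Z₁ Λ x * Real.log (Z₁ Λ x) ∂μ = G1f Λ := by
        refine integral_congr_ae (Filter.Eventually.of_forall fun x => ?_)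
        simp only [hZ₁ Λ hΛ x]
      have e2 : ∫ y, Z₂ Λ y * Real.log (Z₂ Λ y) ∂ν = G2f Λ := by
        refine integral_congr_ae (Filter.Eventually.of_forall fun y => ?_)
        simp only [hZ₂ Λ hΛ y]
      have e0 : Z Λ = Fz Λ := hZ Λ hΛ
      simp only [hV Λ hΛ, e0, e1, e2, one_div_mul_eq_div]
    have final := hWd.congr_of_eventuallyEq heq
    have hGL1 : G1f Λ₀ = L₁ := rfl
    have hGL2 : G2f Λ₀ = L₂ := rfl
    rw [hG1', hG2', hGL1, hGL2] at final
    rw [hσ1, hσ2, hσ3]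
    have hval : (1 / Λ₀ ^ 2) * ((B₁ + B₂) / Fz Λ₀ - A / Fz Λ₀ * ((L₁ + L₂) / Fz Λ₀)) =
        -2 * (1/Λ₀^2 * A / Fz Λ₀) +
          ((1/Λ₀^2 * (B₁ + A)) * Fz Λ₀ - L₁ * (1/Λ₀^2 * A)) / Fz Λ₀ ^ 2 +
          ((1/Λ₀^2 * (B₂ + A)) * Fz Λ₀ - L₂ * (1/Λ₀^2 * A)) / Fz Λ₀ ^ 2 := by
      field_simp
      ring
    rw [hval]
    exact final
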